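/- If ℝ \ {0} can be covered by κ-many rationally independent sets (for κ an infinite cardinal), then 2^ℵ₀ ≤ κ⁺, assuming the Komjáth–Totik partition property: whenever 2^ℵ₀ ≥ (κ⁺)⁺, every coloring g : ℝ → κ admits distinct reals x₀₀, x₀₁, x₁₀, x₁₁ of the same color with x₀₀ + x₁₁ = x₀₁ + x₁₀. -/

import Mathlib

open Cardinal

theorem stmt1 (κ : Cardinal.{0}) (hκ : ℵ₀ ≤ κ)
    (KT : Order.succ (Order.succ κ) ≤ 𝔠 →
      ∀ (C : Type) (g : ℝ → C), #C ≤ κ →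
        ∃ x00 x01 x10 x11 : ℝ, x00 ≠ x01 ∧ x00 ≠ x10 ∧ x00 ≠ x11 ∧ x01 ≠ x10 ∧
          x01 ≠ x11 ∧ x10 ≠ x11 ∧ g x00 = g x01 ∧ g x00 = g x10 ∧ g x00 = g x11 ∧
          x00 + x11 = x01 + x10)
    (hcov : ∃ (ι : Type) (S : ι → Set ℝ), #ι ≤ κ ∧
      (∀ i, LinearIndependent ℚ ((↑) : S i → ℝ)) ∧
      {x : ℝ | x ≠ 0} ⊆ ⋃ i, S i) :
    𝔠 ≤ Order.succ κ := by
  classical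
  by_contra h
  have hlt : Order.succ κ < 𝔠 := not_le.mp h
  have hsucc : Order.succ (Order.succ κ) ≤ 𝔠 := Order.succ_le_of_lt hlt
  obtain ⟨ι, S, hι, hind, hsub⟩ := hcov
  have key : ∀ x : ℝ, x ≠ 0 → ∃ i, x ∈ S i := fun x hx => Set.mem_iUnion.mp (hsub hx)
  choose f hf using key
  set g : ℝ → Option ι := fun x => if h : x = 0 then none else some (f x h) with hg
  have hcard : #(Option ι) ≤ κ := by
    rw [Cardinal.mk_option]
    calc #ι + 1 ≤ κ + 1 := by exact add_le_add hι (le_refl 1)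
    _ = κ := by
        apply Cardinal.add_one_of_aleph0_le hκ
  obtain ⟨x00, x01, x10, x11, d1, d2, d3, d4, d5, d6, c1, c2, c3, hsum⟩ :=
    KT hsucc (Option ι) g hcard
  have h00 : x00 ≠ 0 := by
    intro hz
    have h1 : g x01 = none := by rw [← c1, hg]; simp [hz]
    by_cases h2 : x01 = 0
    · exact d1 (hz.trans h2.symm)
    · simp [hg, h2] at h1
  -- extract memberships
  have gval : ∀ x (hx : x ≠ 0), g x = some (f x hx) := by
    intro x hx; simp [hg, hx]
  have hne : ∀ x : ℝ, g x = g x00 → x ≠ 0 := by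
    intro x hgx hz
    rw [hz, gval x00 h00] at hgx
    simp [hg] at hgx
  have h01 : x01 ≠ 0 := hne _ c1.symm
  have h10 : x10 ≠ 0 := hne _ c2.symm
  have h11 : x11 ≠ 0 := hne _ c3.symm
  set i := f x00 h00 with hi
  have m00 : x00 ∈ S i := hf x00 h00
  have meq : ∀ (x : ℝ) (hx : x ≠ 0), g x = g x00 → x ∈ S i := by
    intro x hx hgx
    rw [gval x hx, gval x00 h00] at hgx
    have : f x hx = i := Option.some_injective _ hgx
    rw [← this]; exact hf x hx
  have m01 : x01 ∈ S i := meq _ h01 c1.symm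
  have m10 : x10 ∈ S i := meq _ h10 c2.symm
  have m11 : x11 ∈ S i := meq _ h11 c3.symm
  -- build the dependence
  set a : S i := ⟨x00, m00⟩
  set b : S i := ⟨x01, m01⟩
  set c : S i := ⟨x10, m10⟩
  set d : S i := ⟨x11, m11⟩
  have hab : a ≠ b := fun h => d1 (congrArg Subtype.val h)
  have hac : a ≠ c := fun h => d2 (congrArg Subtype.val h)
  have had : a ≠ d := fun h => d3 (congrArg Subtype.val h)
  have hbd : b ≠ d := fun h => d5 (congrArg Subtype.val h)
  have hcd : c ≠ d := fun h => d6 (congrArg Subtype.val h)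
  set l : (S i) →₀ ℚ :=
    Finsupp.single a 1 + Finsupp.single d 1 - Finsupp.single b 1 - Finsupp.single c 1 with hl
  have htot : Finsupp.linearCombination ℚ ((↑) : S i → ℝ) l = 0 := by
    simp [hl, Finsupp.linearCombination_single, map_add, map_sub]
    linarith [hsum]
  have hzero := linearIndependent_iff.mp (hind i) l htot
  have : l a = 1 := by
    simp [hl, Finsupp.single_apply, hab.symm, hac.symm, had.symm]
  rw [hzero] at this
  simp at this
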